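/- Let ξ be a real number which is neither rational nor a quadratic irrational, and suppose there exist an increasing sequence of positive integers (Y_k) and points (y_k) in ℤ³ with Y_{k+1} ≍ Y_k^γ, ‖y_k‖ ≍ Y_k, L(y_k) ≍ Y_k^{-1} (implied constants depending only on ξ), where γ = (1+√5)/2. Then ξ is extremal: there is a constant c > 0 such that for every real X ≥ 1 the system |x0| ≤ X, |x0ξ - x1| ≤ cX^{-1/γ}, |x0ξ² - x2| ≤ cX^{-1/γ} has a nonzero integer solution (x0,x1,x2). -/
import Mathlib


noncomputable def gam : ℝ := (1 + Real.sqrt 5) / 2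

noncomputable def normT (x : Fin 3 → ℤ) : ℝ :=
  max (|(x 0 : ℝ)|) (max (|(x 1 : ℝ)|) (|(x 2 : ℝ)|))

noncomputable def Lf (ξ : ℝ) (x : Fin 3 → ℤ) : ℝ :=
  max (|(x 0 : ℝ) * ξ - (x 1 : ℝ)|) (|(x 0 : ℝ) * ξ ^ 2 - (x 2 : ℝ)|)

theorem extremal_of_good_sequence (ξ : ℝ)
    (hirr : ∀ p q r : ℤ, (p : ℝ) + q * ξ + r * ξ ^ 2 = 0 → p = 0 ∧ q = 0 ∧ r = 0)
    (Y : ℕ → ℕ) (hY1 : ∀ k, 1 ≤ Y k) (hYmono : StrictMono Y)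
    (y : ℕ → Fin 3 → ℤ)
    (c₁ c₂ : ℝ) (hc₁ : 0 < c₁) (hc₂ : 0 < c₂)
    (hYk : ∀ k, c₁ * (Y k : ℝ) ^ gam ≤ (Y (k + 1) : ℝ) ∧
      (Y (k + 1) : ℝ) ≤ c₂ * (Y k : ℝ) ^ gam)
    (hnorm : ∀ k, c₁ * (Y k : ℝ) ≤ normT (y k) ∧ normT (y k) ≤ c₂ * (Y k : ℝ))
    (hL : ∀ k, c₁ / (Y k : ℝ) ≤ Lf ξ (y k) ∧ Lf ξ (y k) ≤ c₂ / (Y k : ℝ)) :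
    ∃ c : ℝ, 0 < c ∧ ∀ X : ℝ, 1 ≤ X → ∃ x : Fin 3 → ℤ, x ≠ 0 ∧
      |(x 0 : ℝ)| ≤ X ∧
      |(x 0 : ℝ) * ξ - (x 1 : ℝ)| ≤ c * X ^ (-1 / gam) ∧
      |(x 0 : ℝ) * ξ ^ 2 - (x 2 : ℝ)| ≤ c * X ^ (-1 / gam) := by
  classical
  have h5 : (2:ℝ) < Real.sqrt 5 := by
    have h4 : (2:ℝ) = Real.sqrt 4 := by
      rw [show (4:ℝ) = 2^2 by norm_num, Real.sqrt_sq (by norm_num)]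
    rw [h4]
    exact Real.sqrt_lt_sqrt (by norm_num) (by norm_num)
  have hgam1 : (1:ℝ) < gam := by unfold gam; linarith
  have hgam0 : (0:ℝ) < gam := by linarith
  have hinv : (0:ℝ) < 1/gam := by positivity
  have hY0pos : (0:ℝ) < c₂ * (Y 0 : ℝ) := by
    have := hY1 0
    have : (1:ℝ) ≤ (Y 0 : ℝ) := by exact_mod_cast this
    nlinarith
  set c : ℝ := max ((c₂ * (Y 0 : ℝ)) ^ (1/gam)) (c₂ * (c₂^2) ^ (1/gam)) with hc
  have hcpos : 0 < c := lt_max_of_lt_right (by positivity)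
  refine ⟨c, hcpos, ?_⟩
  intro X hX
  have hXpos : (0:ℝ) < X := lt_of_lt_of_le one_pos hX
  have hXrpos : (0:ℝ) < X ^ (1/gam) := Real.rpow_pos_of_pos hXpos _
  have hneg : X ^ (-1/gam) = (X ^ (1/gam))⁻¹ := by
    rw [show (-1/gam : ℝ) = -(1/gam) by ring, Real.rpow_neg hXpos.le]
  by_cases hsmall : X < c₂ * (Y 0 : ℝ)
  · refine ⟨![0,1,0], ?_, ?_, ?_, ?_⟩
    · intro h
      have := congrFun h 1
      simp at this
    · simp [hXpos.le]
    · have h1 : X ^ (1/gam) ≤ (c₂ * (Y 0 : ℝ)) ^ (1/gam) :=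
        Real.rpow_le_rpow hXpos.le hsmall.le hinv.le
      have h2 : X ^ (1/gam) ≤ c := h1.trans (le_max_left _ _)
      have : (1:ℝ) ≤ c * (X ^ (1/gam))⁻¹ := by
        rw [← div_eq_mul_inv]
        exact (one_le_div hXrpos).mpr h2
      simpa [hneg] using this
    · rw [hneg]
      have : (0:ℝ) ≤ c * (X ^ (1/gam))⁻¹ := by positivity
      simpa using this
  · push_neg at hsmall
    have hex : ∃ k, X < c₂ * (Y k : ℝ) := by
      obtain ⟨n, hn⟩ := exists_nat_gt (X / c₂)
      refine ⟨n, ?_⟩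
      have hle : (n : ℝ) ≤ (Y n : ℝ) := by exact_mod_cast hYmono.le_apply
      have : X / c₂ < (Y n : ℝ) := lt_of_lt_of_le hn hle
      calc X = c₂ * (X / c₂) := by field_simp
        _ < c₂ * (Y n : ℝ) := by exact mul_lt_mul_of_pos_left this hc₂
    set m := Nat.find hex with hm
    have hm2 : X < c₂ * (Y m : ℝ) := Nat.find_spec hex
    have hmpos : m ≠ 0 := by
      intro h
      rw [h] at hm2
      exact absurd hm2 (not_lt.mpr hsmall)
    obtain ⟨k, hk⟩ : ∃ k, m = k + 1 := ⟨m - 1, (Nat.succ_pred_eq_of_pos (Nat.pos_of_ne_zero hmpos)).symm⟩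
    have hA : c₂ * (Y k : ℝ) ≤ X := by
      have := Nat.find_min hex (m := k) (by omega)
      exact not_lt.mp this
    have hB : X < c₂ * (Y (k+1) : ℝ) := by rw [hk] at hm2; exact hm2
    have hYkpos : (0:ℝ) < (Y k : ℝ) := by
      have := hY1 k; exact_mod_cast Nat.lt_of_lt_of_le Nat.zero_lt_one this
    -- X < c₂^2 * Yk^gam
    have hC : X < c₂^2 * (Y k : ℝ) ^ gam := by
      have h1 := (hYk k).2
      nlinarith [hB]
    -- rpow
    have hpow : ((Y k : ℝ) ^ gam) ^ (1/gam) = (Y k : ℝ) := by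
      rw [← Real.rpow_mul hYkpos.le, mul_one_div, div_self (ne_of_gt hgam0), Real.rpow_one]
    have hD : X ^ (1/gam) ≤ (c₂^2) ^ (1/gam) * (Y k : ℝ) := by
      have h1 : X ^ (1/gam) ≤ (c₂^2 * (Y k : ℝ) ^ gam) ^ (1/gam) :=
        Real.rpow_le_rpow hXpos.le hC.le hinv.le
      rwa [Real.mul_rpow (by positivity) (by positivity), hpow] at h1
    -- the point y k works
    have hx0 : |((y k 0 : ℤ) : ℝ)| ≤ normT (y k) := le_max_left _ _
    have hL1 : |((y k 0 : ℤ) : ℝ) * ξ - ((y k 1 : ℤ) : ℝ)| ≤ Lf ξ (y k) := le_max_left _ _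
    have hL2 : |((y k 0 : ℤ) : ℝ) * ξ^2 - ((y k 2 : ℤ) : ℝ)| ≤ Lf ξ (y k) := le_max_right _ _
    have hLc : Lf ξ (y k) ≤ c * X ^ (-1/gam) := by
      have h1 : Lf ξ (y k) ≤ c₂ / (Y k : ℝ) := (hL k).2
      have h2 : c₂ / (Y k : ℝ) ≤ c₂ * (c₂^2) ^ (1/gam) * (X ^ (1/gam))⁻¹ := by
        rw [div_le_iff₀ hYkpos]
        have h3 : c₂ * X ^ (1/gam) ≤ c₂ * ((c₂^2) ^ (1/gam) * (Y k : ℝ)) :=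
          mul_le_mul_of_nonneg_left hD hc₂.le
        calc c₂ = c₂ * X ^ (1/gam) * (X ^ (1/gam))⁻¹ := by field_simp
          _ ≤ c₂ * ((c₂^2) ^ (1/gam) * (Y k : ℝ)) * (X ^ (1/gam))⁻¹ :=
            mul_le_mul_of_nonneg_right h3 (by positivity)
          _ = c₂ * (c₂^2) ^ (1/gam) * (X ^ (1/gam))⁻¹ * (Y k : ℝ) := by ring
      have h3 : c₂ * (c₂^2) ^ (1/gam) * (X ^ (1/gam))⁻¹ ≤ c * (X ^ (1/gam))⁻¹ := by
        apply mul_le_mul_of_nonneg_right (le_max_right _ _) (by positivity)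
      rw [hneg]
      linarith
    refine ⟨y k, ?_, ?_, hL1.trans hLc, hL2.trans hLc⟩
    · intro h
      have hn := (hnorm k).1
      rw [h] at hn
      have : normT (0 : Fin 3 → ℤ) = 0 := by simp [normT]
      rw [this] at hn
      nlinarith
    · have := (hnorm k).2
      calc |((y k 0 : ℤ) : ℝ)| ≤ normT (y k) := hx0
        _ ≤ c₂ * (Y k : ℝ) := this
        _ ≤ X := hA
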